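/- Let ε₁, ε₂, σ be real and B = E(k₁)⊗I + I⊗E(k₂) + σ²·(a⊗a) as above. If v is a nonzero vector with B v = iω v for a complex number ω, then 4ε₁²ε₂² + 2iωσ² = (ε₁² + ε₂² - ω²)². -/

import Mathlib

set_option maxHeartbeats 2000000
set_option maxRecDepth 8000


open Matrix Kronecker

def e4 : Fin 4 ≃ Fin 2 × Fin 2 where
  toFun := ![(0,0),(0,1),(1,0),(1,1)]
  invFun p := ![![0,1],![2,3]] p.1 p.2
  left_inv := by decide
  right_inv := by decide

/-- Dispersion relation (apend17): if `B v = iω v` for a nonzero `v`, where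
`B = E(k₁)⊗I + I⊗E(k₂) + σ²(a⊗a)`, then `4ε₁²ε₂² + 2iωσ² = (ε₁²+ε₂²-ω²)²`. -/
theorem stmt5 (ε₁ ε₂ σ : ℝ) (ω : ℂ)
    (E₁ E₂ a : Matrix (Fin 2) (Fin 2) ℂ)
    (hE₁ : E₁ = !![0, 1; -(ε₁ : ℂ) ^ 2, 0])
    (hE₂ : E₂ = !![0, 1; -(ε₂ : ℂ) ^ 2, 0])
    (ha : a = !![0, 0; 1, 0])
    (B : Matrix (Fin 2 × Fin 2) (Fin 2 × Fin 2) ℂ)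
    (hB : B = E₁ ⊗ₖ (1 : Matrix (Fin 2) (Fin 2) ℂ) + (1 : Matrix (Fin 2) (Fin 2) ℂ) ⊗ₖ E₂
        + ((σ : ℂ) ^ 2) • (a ⊗ₖ a))
    (v : Fin 2 × Fin 2 → ℂ) (hv : v ≠ 0)
    (heig : B.mulVec v = (Complex.I * ω) • v) :
    4 * (ε₁ : ℂ) ^ 2 * (ε₂ : ℂ) ^ 2 + 2 * Complex.I * ω * (σ : ℂ) ^ 2
      = ((ε₁ : ℂ) ^ 2 + (ε₂ : ℂ) ^ 2 - ω ^ 2) ^ 2 := by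
  set M : Matrix (Fin 2 × Fin 2) (Fin 2 × Fin 2) ℂ :=
    B - (Complex.I * ω) • (1 : Matrix (Fin 2 × Fin 2) (Fin 2 × Fin 2) ℂ) with hM
  have hMv : M.mulVec v = 0 := by
    rw [hM, sub_mulVec, smul_mulVec, one_mulVec, heig, sub_self]
  have hdet : M.det = 0 := Matrix.exists_mulVec_eq_zero_iff.mp ⟨v, hv, hMv⟩
  have hsub : (M.submatrix e4 e4).det = M.det := Matrix.det_submatrix_equiv_self e4 M
  have hdet' : (M.submatrix e4 e4).det = 0 := hsub.trans hdet
  have hN : M.submatrix e4 e4 =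
      !![-(Complex.I * ω), 1, 1, 0;
         -(ε₂ : ℂ) ^ 2, -(Complex.I * ω), 0, 1;
         -(ε₁ : ℂ) ^ 2, 0, -(Complex.I * ω), 1;
         (σ : ℂ) ^ 2, -(ε₁ : ℂ) ^ 2, -(ε₂ : ℂ) ^ 2, -(Complex.I * ω)] := by
    ext i j
    fin_cases i <;> fin_cases j <;>
      simp [hM, hB, hE₁, hE₂, ha, e4, Matrix.one_apply, Prod.ext_iff]
  rw [hN] at hdet'
  have hs1 : Fin.succAbove (1 : Fin 4) 2 = 3 := by decide
  have hs2 : Fin.succAbove (2 : Fin 4) 2 = 3 := by decide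
  norm_num [Matrix.det_succ_row_zero, Fin.sum_univ_succ, hs1, hs2, Matrix.cons_val_zero, Matrix.cons_val_one, Matrix.cons_val_two, Matrix.cons_val_three] at hdet'
  linear_combination -hdet' +
    (2 * ω ^ 2 * ((ε₁ : ℂ) ^ 2 + (ε₂ : ℂ) ^ 2) + ω ^ 4 * (Complex.I ^ 2 - 1)) * Complex.I_sq
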